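/- The Catalan numbers C(n) = C(2n,n)/(n+1) are not MC-finite: the sequence n ↦ C(n) mod 2 is not eventually periodic, since C(n) is odd if and only if n = 2^m − 1 for some m ∈ ℕ. -/

import Mathlib

open Finset

private lemma cat_mod2 (n : ℕ) :
    ((catalan (n + 1) : ZMod 2)) = if 2 ∣ n then (catalan (n / 2) : ZMod 2) else 0 := by
  rw [catalan_succ']
  push_cast
  have hg1 : ∀ a : ℕ × ℕ,
      (catalan a.1 : ZMod 2) * (catalan a.2) + ((catalan a.2 : ZMod 2) * (catalan a.1)) = 0 := by
    intro a; rw [mul_comm]; exact CharTwo.add_self_eq_zero _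
  split_ifs with h
  · obtain ⟨k, rfl⟩ := h
    have hmem : ((k, k) : ℕ × ℕ) ∈ antidiagonal (2 * k) := by
      simp [two_mul]
    rw [← Finset.add_sum_erase _ _ hmem]
    have h0 : ∑ ij ∈ (antidiagonal (2 * k)).erase (k, k),
        ((catalan ij.1 : ZMod 2) * (catalan ij.2 : ZMod 2)) = 0 := by
      apply Finset.sum_involution (g := fun ij _ => (ij.2, ij.1))
      · intro a ha; exact hg1 a
      · intro a ha _ hc
        have h1 : a.2 = a.1 := congrArg Prod.fst hc
        simp only [Finset.mem_erase, Finset.HasAntidiagonal.mem_antidiagonal] at ha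
        apply ha.1
        obtain ⟨x, y⟩ := a
        simp only [Prod.mk.injEq]
        simp only at h1
        omega
      · intro a ha
        simp only [Finset.mem_erase, Finset.HasAntidiagonal.mem_antidiagonal] at ha ⊢
        refine ⟨?_, by omega⟩
        intro hc
        apply ha.1
        cases a
        simp only [Prod.mk.injEq] at hc ⊢
        omega
      · intro a ha; rfl
    rw [h0, add_zero]
    have hk2 : (2 * k) / 2 = k := by omega
    rw [hk2, ← sq]
    have hsq : ∀ x : ZMod 2, x ^ 2 = x := by decide
    exact hsq _
  · apply Finset.sum_involution (g := fun ij _ => (ij.2, ij.1))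
    · intro a ha; exact hg1 a
    · intro a ha _ hc
      have h1 : a.2 = a.1 := congrArg Prod.fst hc
      simp only [Finset.HasAntidiagonal.mem_antidiagonal] at ha
      exact h ⟨a.1, by omega⟩
    · intro a ha
      simp only [Finset.HasAntidiagonal.mem_antidiagonal] at ha ⊢
      omega
    · intro a ha; rfl

private lemma cat_key : ∀ n : ℕ, catalan n % 2 = 1 ↔ ∃ m : ℕ, n + 1 = 2 ^ m := by
  intro n
  induction n using Nat.strong_induction_on with
  | _ n ih =>
    match n with
    | 0 =>
      constructor
      · intro _; exact ⟨0, rfl⟩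
      · intro _; simp [catalan_zero]
    | (k + 1) =>
      have h2 := cat_mod2 k
      by_cases hk : 2 ∣ k
      · obtain ⟨j, rfl⟩ := hk
        have hj : (2 * j) / 2 = j := by omega
        rw [hj, if_pos ⟨j, rfl⟩] at h2
        have heq : catalan (2 * j + 1) % 2 = catalan j % 2 :=
          (ZMod.natCast_eq_natCast_iff' _ _ _).mp h2
        rw [heq, ih j (by omega)]
        constructor
        · rintro ⟨m, hm⟩
          exact ⟨m + 1, by rw [pow_succ]; omega⟩
        · rintro ⟨m, hm⟩
          match m with
          | 0 => omega
          | (m' + 1) => exact ⟨m', by rw [pow_succ] at hm; omega⟩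
      · rw [if_neg hk] at h2
        have h0 : catalan (k + 1) % 2 = 0 := by
          have := (ZMod.natCast_eq_natCast_iff' (catalan (k+1)) 0 2).mp (by simpa using h2)
          simpa using this
        rw [h0]
        constructor
        · intro hc; omega
        · rintro ⟨m, hm⟩
          match m with
          | 0 => omega
          | (m' + 1) =>
            exfalso; apply hk
            rw [pow_succ] at hm
            omega

theorem stmt_8 :
    (∀ n : ℕ, (catalan n % 2 = 1 ↔ ∃ m : ℕ, n = 2 ^ m - 1)) ∧
    ¬ ∃ N p : ℕ, 1 ≤ p ∧ ∀ n ≥ N, catalan (n + p) % 2 = catalan n % 2 := by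
  have key := cat_key
  constructor
  · intro n
    rw [key n]
    constructor
    · rintro ⟨m, hm⟩; exact ⟨m, by omega⟩
    · rintro ⟨m, hm⟩
      refine ⟨m, ?_⟩
      have : 1 ≤ 2 ^ m := Nat.one_le_two_pow
      omega
  · rintro ⟨N, p, hp, h⟩
    set m := N + p with hm
    have hlt : N + p < 2 ^ m := Nat.lt_two_pow_self
    set n := 2 ^ m - 1 with hn
    have h1 : 1 ≤ 2 ^ m := Nat.one_le_two_pow
    have hodd : catalan n % 2 = 1 := (key n).mpr ⟨m, by omega⟩
    have hodd2 : catalan (n + p) % 2 = 1 := by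
      rw [h n (by omega)]; exact hodd
    obtain ⟨m', hm'⟩ := (key (n + p)).mp hodd2
    have hgt : 2 ^ m < 2 ^ m' := by omega
    have hle : m + 1 ≤ m' := by
      by_contra hc
      push_neg at hc
      have : 2 ^ m' ≤ 2 ^ m := Nat.pow_le_pow_right (by norm_num) (by omega)
      omega
    have : 2 ^ (m + 1) ≤ 2 ^ m' := Nat.pow_le_pow_right (by norm_num) hle
    rw [pow_succ] at this
    omega
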